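/- Let g : 𝕏 → 𝕏 be a homeomorphism with g(Q × {0⃗}) = Q × {0⃗}. Then there exists a permutation σ of ℕ such that g(𝒳_n) = 𝒳_{σ(n)} for every n ∈ ℕ, where 𝒳_n = {(x,y) ∈ 𝕏 : y_n > 0}. -/

import Mathlib

open Set Topology

/-- The Hilbert cube `Q = ∏_{n ∈ ℕ} [0,1]`. -/
abbrev Q : Type := ℕ → unitInterval

/-- `𝕏 = {(x,y) ∈ Q × Q : y_m ≠ 0 for at most one index m}`. -/
def XX : Set (Q × Q) := {p | {m : ℕ | p.2 m ≠ 0}.Subsingleton}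

/-- The copy `Q × {0⃗}` of `Q` inside `𝕏`. -/
def QQ0 : Set ↥XX := {p | (p : Q × Q).2 = 0}

/-- `𝒳_n = {(x,y) ∈ 𝕏 : y_n > 0}`. -/
def XXn (n : ℕ) : Set ↥XX := {p | 0 < (p : Q × Q).2 n}

def ee (n : ℕ) (t : unitInterval) : Q := fun m => if m = n then t else 0

lemma mem_XX_pair (x : Q) (n : ℕ) (t : unitInterval) : (x, ee n t) ∈ XX := by
  intro a ha b hb
  have ha' : a = n := by by_contra h; simp [ee, h] at ha
  have hb' : b = n := by by_contra h; simp [ee, h] at hb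
  rw [ha', hb']

lemma pos_of_ne (u : unitInterval) (h : u ≠ 0) : 0 < u := by
  refine lt_of_le_of_ne ?_ (Ne.symm h)
  exact Subtype.coe_le_coe.mp (by simpa using u.2.1)

lemma XXn_nonempty (n : ℕ) : (XXn n).Nonempty := by
  refine ⟨⟨(fun _ => 0, ee n 1), mem_XX_pair _ n 1⟩, ?_⟩
  simp [XXn, ee]

lemma XXn_eq_of_inter (n m : ℕ) (h : (XXn n ∩ XXn m).Nonempty) : n = m := by
  obtain ⟨p, hn, hm⟩ := h
  exact p.2 (ne_of_gt hn) (ne_of_gt hm)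

lemma XXn_open (n : ℕ) : IsOpen (XXn n) := by
  have hc : Continuous fun p : ↥XX => (p : Q × Q).2 n :=
    (continuous_apply n).comp (continuous_snd.comp continuous_subtype_val)
  have : XXn n = (fun p : ↥XX => (p : Q × Q).2 n) ⁻¹' ({0}ᶜ) := by
    ext p
    simp only [XXn, mem_setOf_eq, mem_preimage, mem_compl_iff, mem_singleton_iff]
    exact ⟨fun h => ne_of_gt h, fun h => pos_of_ne _ h⟩
  rw [this]
  exact (isOpen_compl_singleton).preimage hc

lemma not_mem_QQ0_iff (p : ↥XX) : p ∉ QQ0 ↔ ∃ m, p ∈ XXn m := by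
  constructor
  · intro h
    have : ∃ m, (p : Q × Q).2 m ≠ 0 := by
      by_contra hc
      push_neg at hc
      exact h (funext hc)
    obtain ⟨m, hm⟩ := this
    exact ⟨m, pos_of_ne _ hm⟩
  · rintro ⟨m, hm⟩ h
    have : (p : Q × Q).2 m = 0 := by rw [h]; rfl
    exact absurd this (ne_of_gt hm)

lemma Ioi_preconnected : IsPreconnected (Ioi (0 : unitInterval)) := by
  have : Ioi (0 : unitInterval) = Set.projIcc (0:ℝ) 1 zero_le_one '' Ioc 0 1 := by
    ext t
    constructor
    · intro ht
      refine ⟨(t : ℝ), ⟨?_, t.2.2⟩, ?_⟩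
      · exact lt_of_le_of_ne t.2.1 (fun h => (ne_of_gt ht) (Subtype.ext h.symm : t = 0))
      · exact Set.projIcc_val (by norm_num) t
    · rintro ⟨s, ⟨hs0, hs1⟩, rfl⟩
      have : Set.projIcc (0:ℝ) 1 zero_le_one s = ⟨s, le_of_lt hs0, hs1⟩ :=
        Set.projIcc_of_mem _ ⟨le_of_lt hs0, hs1⟩
      rw [this]
      show (0:unitInterval) < ⟨s, _⟩
      exact Subtype.mk_lt_mk.mpr hs0
  rw [this]
  exact isPreconnected_Ioc.image _ (continuous_projIcc).continuousOn

lemma XXn_preconnected (n : ℕ) : IsPreconnected (XXn n) := by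
  have hF : Continuous (fun z : Q × unitInterval =>
      (⟨(z.1, ee n z.2), mem_XX_pair z.1 n z.2⟩ : ↥XX)) := by
    refine Continuous.subtype_mk ?_ _
    refine continuous_fst.prodMk ?_
    refine continuous_pi fun m => ?_
    dsimp only [ee]
    split_ifs with h
    · exact continuous_snd
    · exact continuous_const
  have himg : XXn n = (fun z : Q × unitInterval =>
      (⟨(z.1, ee n z.2), mem_XX_pair z.1 n z.2⟩ : ↥XX)) '' (univ ×ˢ Ioi 0) := by
    ext p
    constructor
    · intro hp
      refine ⟨((p : Q × Q).1, (p : Q × Q).2 n), ⟨mem_univ _, hp⟩, ?_⟩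
      apply Subtype.ext
      refine Prod.ext rfl ?_
      funext m
      dsimp only [ee]
      split_ifs with h
      · rw [h]
      · by_contra hc
        have hne : (p : Q × Q).2 m ≠ 0 := fun h0 => hc h0.symm
        exact h (p.2 hne (ne_of_gt hp))
    · rintro ⟨⟨x, t⟩, ⟨-, ht⟩, rfl⟩
      simpa [XXn, ee] using ht
  rw [himg]
  exact ((isPreconnected_univ.prod Ioi_preconnected).image _ hF.continuousOn)

lemma exists_subset (g : ↥XX ≃ₜ ↥XX) (hg : g '' QQ0 = QQ0) (n : ℕ) :
    ∃ m, g '' XXn n ⊆ XXn m := by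
  have hconn : IsPreconnected (g '' XXn n) :=
    (XXn_preconnected n).image _ (g.continuous.continuousOn)
  have hne : (g '' XXn n).Nonempty := (XXn_nonempty n).image _
  have hout : ∀ p ∈ g '' XXn n, p ∉ QQ0 := by
    rintro p ⟨q, hq, rfl⟩ hp
    rw [← hg] at hp
    obtain ⟨r, hr, hrq⟩ := hp
    have heq : r = q := g.injective hrq
    exact (not_mem_QQ0_iff r).mpr ⟨n, by rw [heq]; exact hq⟩ hr
  obtain ⟨p, hp⟩ := hne
  obtain ⟨m, hm⟩ := (not_mem_QQ0_iff p).mp (hout p hp)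
  refine ⟨m, ?_⟩
  have hu : IsOpen (XXn m) := XXn_open m
  have hv : IsOpen (⋃ k ∈ ({m}ᶜ : Set ℕ), XXn k) :=
    isOpen_biUnion (fun k _ => XXn_open k)
  have hdisj : Disjoint (XXn m) (⋃ k ∈ ({m}ᶜ : Set ℕ), XXn k) := by
    rw [disjoint_left]
    intro q hq hq'
    simp only [mem_iUnion] at hq'
    obtain ⟨k, hk, hqk⟩ := hq'
    exact hk (XXn_eq_of_inter m k ⟨q, hq, hqk⟩).symm
  have hsub : g '' XXn n ⊆ XXn m ∪ ⋃ k ∈ ({m}ᶜ : Set ℕ), XXn k := by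
    intro q hq
    obtain ⟨k, hk⟩ := (not_mem_QQ0_iff q).mp (hout q hq)
    rcases eq_or_ne k m with rfl | hkm
    · exact Or.inl hk
    · exact Or.inr (mem_biUnion hkm hk)
  exact hconn.subset_left_of_subset_union hu hv hdisj hsub ⟨p, hp, hm⟩

/-- a homeomorphism of `𝕏` fixing `Q × {0⃗}` setwise permutes the sets `𝒳_n`. -/
theorem homeomorph_permutes_XXn
    (g : ↥XX ≃ₜ ↥XX) (hg : g '' QQ0 = QQ0) :
    ∃ σ : Equiv.Perm ℕ, ∀ n : ℕ, g '' XXn n = XXn (σ n) := by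
  have hg' : g.symm '' QQ0 = QQ0 := by
    conv_lhs => rw [← hg]
    exact g.toEquiv.symm_image_image QQ0
  choose f hf using exists_subset g hg
  choose f' hf' using exists_subset g.symm hg'
  have key : ∀ n, XXn n ⊆ XXn (f' (f n)) := by
    intro n
    intro p hp
    have : g p ∈ XXn (f n) := hf n ⟨p, hp, rfl⟩
    have := hf' (f n) ⟨g p, this, rfl⟩
    simpa using this
  have key' : ∀ m, XXn m ⊆ XXn (f (f' m)) := by
    intro m p hp
    have : g.symm p ∈ XXn (f' m) := hf' m ⟨p, hp, rfl⟩
    have := hf (f' m) ⟨g.symm p, this, rfl⟩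
    simpa using this
  have hlf : ∀ n, f' (f n) = n := by
    intro n
    obtain ⟨p, hp⟩ := XXn_nonempty n
    exact (XXn_eq_of_inter _ _ ⟨p, key n hp, hp⟩)
  have hrf : ∀ m, f (f' m) = m := by
    intro m
    obtain ⟨p, hp⟩ := XXn_nonempty m
    exact (XXn_eq_of_inter _ _ ⟨p, key' m hp, hp⟩)
  refine ⟨⟨f, f', hlf, hrf⟩, fun n => ?_⟩
  refine subset_antisymm (hf n) ?_
  intro p hp
  have h1 : g.symm p ∈ XXn (f' (f n)) := hf' (f n) ⟨p, hp, rfl⟩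
  rw [hlf n] at h1
  exact ⟨g.symm p, h1, by simp⟩
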